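/- arXiv:1105.6075 — 4 statements merged into one kernel-verified Lean document; each statement's English description precedes it below -/
import Mathlib

section
/- Let V be a finite index set with finite state spaces X_v of size at least 2, and let L ⊆ M ⊆ V with L nonempty and N = M ∖ L. Suppose p and q are strictly positive probability distributions on X_M such that (a) λ_A^M(x_A)[p] = λ_A^M(x_A)[q] for every A with L ⊆ A ⊆ M and every x_A ∈ X_A, and (b) for every v ∈ L, the conditional distributions of X_{L∖{v}} given X_N agree: p_{L∖{v}|N} = q_{L∖{v}|N}. Then the conditional distributions of X_L given X_N agree: p_{L|N}(x_L | x_N) = q_{L|N}(x_L | x_N) for all x_L ∈ X_L, x_N ∈ X_N. -/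
open Finset

open scoped Classical

variable {V : Type} [Fintype V] [DecidableEq V]

/-- Joint state space: variable `v` takes values in `{0, …, d v + 1}`,
so each state space has size `d v + 2 ≥ 2`. -/
abbrev Config (V : Type) (d : V → ℕ) : Type := ∀ v : V, Fin (d v + 2)

/-- Marginal `p_M` of `p` on the margin `M`, as a function of a full configuration
(it depends only on the coordinates in `M`). -/
noncomputable def margin (d : V → ℕ) (p : Config V d → ℝ) (M : Finset V)
    (x : Config V d) : ℝ :=
  ∑ y : Config V d, if ∀ v ∈ M, y v = x v then p y else 0

/-- Marginal log-linear parameter `λ_L^M(x_L)`: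
`|X_M|⁻¹ ∑_{y_M ∈ X_M} log p_M(y_M) ∏_{v ∈ L} (|X_v|·1[x_v = y_v] − 1)`.
The sum over `y_M ∈ X_M` is realized by summing over full configurations `y`
that are `0` outside `M` (one representative for each `y_M`). -/
noncomputable def mll (d : V → ℕ) (p : Config V d → ℝ) (L M : Finset V)
    (x : Config V d) : ℝ :=
  (∏ v ∈ M, ((d v + 2 : ℕ) : ℝ))⁻¹ *
    ∑ y : Config V d,
      if ∀ v ∉ M, y v = 0 then
        Real.log (margin d p M y) *
          ∏ v ∈ L, (((d v + 2 : ℕ) : ℝ) * (if x v = y v then 1 else 0) - 1)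
      else 0

/-- Conditional independence `X_A ⊥ X_B | X_C [p]`:
`p_{A∪B∪C}(x) · p_C(x) = p_{A∪C}(x) · p_{B∪C}(x)` for all configurations. -/
def CondIndep (d : V → ℕ) (p : Config V d → ℝ) (A B C : Finset V) : Prop :=
  ∀ x : Config V d,
    margin d p (A ∪ B ∪ C) x * margin d p C x
      = margin d p (A ∪ C) x * margin d p (B ∪ C) x

section Aux

set_option linter.unusedSectionVars false

lemma margin_congr {d : V → ℕ} (p : Config V d → ℝ) {S : Finset V} {x x' : Config V d}
    (h : ∀ v ∈ S, x v = x' v) : margin d p S x = margin d p S x' := by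
  unfold margin
  refine Finset.sum_congr rfl fun y _ => ?_
  refine if_congr ?_ rfl rfl
  constructor
  · intro hy v hv; rw [hy v hv, h v hv]
  · intro hy v hv; rw [hy v hv, h v hv]

lemma margin_update {d : V → ℕ} (p : Config V d → ℝ) {S : Finset V} {v : V}
    (hv : v ∉ S) (x : Config V d) (a : Fin (d v + 2)) :
    margin d p S (Function.update x v a) = margin d p S x := by
  refine margin_congr p fun w hw => ?_
  have hwv : w ≠ v := by rintro rfl; exact hv hw
  exact Function.update_of_ne hwv a x

lemma margin_pos {d : V → ℕ} {p : Config V d → ℝ} (hp : ∀ x, 0 < p x)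
    (S : Finset V) (x : Config V d) : 0 < margin d p S x := by
  unfold margin
  refine Finset.sum_pos' (fun y _ => ?_) ⟨x, Finset.mem_univ x, ?_⟩
  · split
    · exact (hp y).le
    · exact le_refl 0
  · simp [hp x]

lemma margin_erase {d : V → ℕ} (p : Config V d → ℝ) {M : Finset V} {v : V}
    (hv : v ∈ M) (x : Config V d) :
    ∑ a : Fin (d v + 2), margin d p M (Function.update x v a)
      = margin d p (M.erase v) x := by
  unfold margin
  rw [Finset.sum_comm]
  refine Finset.sum_congr rfl fun y _ => ?_
  have key : ∀ a : Fin (d v + 2),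
      (∀ w ∈ M, y w = Function.update x v a w) ↔ (y v = a ∧ ∀ w ∈ M.erase v, y w = x w) := by
    intro a
    constructor
    · intro h
      refine ⟨by simpa using h v hv, fun w hw => ?_⟩
      have hwv : w ≠ v := Finset.ne_of_mem_erase hw
      have := h w (Finset.mem_of_mem_erase hw)
      rwa [Function.update_of_ne hwv] at this
    · rintro ⟨h1, h2⟩ w hw
      by_cases hwv : w = v
      · subst hwv; simpa using h1
      · rw [Function.update_of_ne hwv]
        exact h2 w (Finset.mem_erase.2 ⟨hwv, hw⟩)
  calc ∑ a : Fin (d v + 2), (if ∀ w ∈ M, y w = Function.update x v a w then p y else 0)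
      = ∑ a : Fin (d v + 2), (if y v = a ∧ ∀ w ∈ M.erase v, y w = x w then p y else 0) := by
        exact Finset.sum_congr rfl fun a _ => if_congr (key a) rfl rfl
    _ = if ∀ w ∈ M.erase v, y w = x w then p y else 0 := by
        simp only [ite_and]
        rw [Finset.sum_ite_eq]
        simp

lemma piSplit_update {d : V → ℕ} (v : V) (z : ∀ j : {j // j ≠ v}, Fin (d j.1 + 2))
    (a : Fin (d v + 2)) :
    (Equiv.piSplitAt v (fun w => Fin (d w + 2))).symm (a, z)
      = Function.update ((Equiv.piSplitAt v (fun w => Fin (d w + 2))).symm (0, z)) v a := by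
  funext w
  by_cases h : w = v
  · subst h
    simp [Equiv.piSplitAt_symm_apply, Function.update_self]
  · simp [Equiv.piSplitAt_symm_apply, h, Function.update_of_ne h]

lemma keyZ {d : V → ℕ} {L M : Finset V} (hLM : L ⊆ M)
    (p q : Config V d → ℝ)
    (hb : ∀ v ∈ L, ∀ x : Config V d,
      margin d p (L.erase v ∪ (M \ L)) x / margin d p (M \ L) x
        = margin d q (L.erase v ∪ (M \ L)) x / margin d q (M \ L) x)
    {v : V} (hv : v ∈ L) (A : Config V d → ℝ)
    (hA : ∀ (x : Config V d) a, A (Function.update x v a) = A x) :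
    ∑ x : Config V d,
      (margin d p M x / margin d p (M \ L) x
        - margin d q M x / margin d q (M \ L) x) * A x = 0 := by
  have hvM : v ∈ M := hLM hv
  have hvN : v ∉ M \ L := fun h => (Finset.mem_sdiff.1 h).2 hv
  have hMe : M.erase v = L.erase v ∪ (M \ L) := by
    ext w
    simp only [Finset.mem_erase, Finset.mem_union, Finset.mem_sdiff]
    constructor
    · rintro ⟨hwv, hwM⟩
      by_cases hwL : w ∈ L
      · exact Or.inl ⟨hwv, hwL⟩
      · exact Or.inr ⟨hwM, hwL⟩
    · rintro (⟨hwv, hwL⟩ | ⟨hwM, hwL⟩)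
      · exact ⟨hwv, hLM hwL⟩
      · exact ⟨fun h => hwL (h ▸ hv), hwM⟩
  set e := Equiv.piSplitAt v (fun w => Fin (d w + 2)) with he
  rw [← Equiv.sum_comp e.symm, Fintype.sum_prod_type, Finset.sum_comm]
  refine Finset.sum_eq_zero fun z _ => ?_
  set x₀ : Config V d := e.symm (0, z) with hx0
  have hupd : ∀ a : Fin (d v + 2), e.symm (a, z) = Function.update x₀ v a :=
    fun a => piSplit_update v z a
  calc ∑ a : Fin (d v + 2),
        (margin d p M (e.symm (a, z)) / margin d p (M \ L) (e.symm (a, z))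
          - margin d q M (e.symm (a, z)) / margin d q (M \ L) (e.symm (a, z))) * A (e.symm (a, z))
      = (∑ a : Fin (d v + 2),
          (margin d p M (Function.update x₀ v a) / margin d p (M \ L) x₀
            - margin d q M (Function.update x₀ v a) / margin d q (M \ L) x₀)) * A x₀ := by
        rw [Finset.sum_mul]
        refine Finset.sum_congr rfl fun a _ => ?_
        rw [hupd a, margin_update p hvN, margin_update q hvN, hA]
    _ = 0 := by
        rw [Finset.sum_sub_distrib, ← Finset.sum_div, ← Finset.sum_div,
          margin_erase p hvM, margin_erase q hvM, hMe, hb v hv x₀, sub_self, zero_mul]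

/-- The partial sum `T_S(F)(x) = ∑_{y ≡ x off S (within M), y ≡ 0 off M} F(y)`. -/
noncomputable def Tsum (d : V → ℕ) (F : Config V d → ℝ) (M S : Finset V)
    (x : Config V d) : ℝ :=
  ∑ y : Config V d, if (∀ v ∉ M, y v = 0) ∧ (∀ v ∈ M \ S, y v = x v) then F y else 0

lemma Tsum_update {d : V → ℕ} (F : Config V d → ℝ) {M S : Finset V} {v : V}
    (hv : v ∈ S) (x : Config V d) (a : Fin (d v + 2)) :
    Tsum d F M S (Function.update x v a) = Tsum d F M S x := by
  unfold Tsum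
  refine Finset.sum_congr rfl fun y _ => if_congr (and_congr_right fun _ => ?_) rfl rfl
  refine forall₂_congr fun w hw => ?_
  have hwv : w ≠ v := fun h => (Finset.mem_sdiff.1 hw).2 (h ▸ hv)
  rw [Function.update_of_ne hwv]

lemma Tsum_sub {d : V → ℕ} (F G : Config V d → ℝ) (M S : Finset V) (x : Config V d) :
    Tsum d (fun y => F y - G y) M S x = Tsum d F M S x - Tsum d G M S x := by
  unfold Tsum
  rw [← Finset.sum_sub_distrib]
  refine Finset.sum_congr rfl fun y _ => ?_
  split_ifs <;> simp

lemma Tsum_empty {d : V → ℕ} (F : Config V d → ℝ) (M : Finset V) (x : Config V d) :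
    Tsum d F M ∅ x = F (fun w => if w ∈ M then x w else 0) := by
  set x₀ : Config V d := fun w => if w ∈ M then x w else 0 with hx0
  have hiff : ∀ y : Config V d,
      ((∀ v ∉ M, y v = 0) ∧ ∀ v ∈ M \ (∅ : Finset V), y v = x v) ↔ y = x₀ := by
    intro y
    constructor
    · rintro ⟨h1, h2⟩
      funext w
      by_cases hw : w ∈ M
      · rw [hx0]
        simp only [if_pos hw]
        exact h2 w (by simp [hw])
      · rw [hx0]
        simp only [if_neg hw]
        exact h1 w hw
    · rintro rfl
      constructor
      · intro v hv; rw [hx0]; simp [hv]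
      · intro v hv; rw [hx0]; simp [(Finset.mem_sdiff.1 hv).1]
  unfold Tsum
  calc ∑ y : Config V d, (if (∀ v ∉ M, y v = 0) ∧ ∀ v ∈ M \ (∅ : Finset V), y v = x v
          then F y else 0)
      = ∑ y : Config V d, (if y = x₀ then F y else 0) :=
        Finset.sum_congr rfl fun y _ => if_congr (hiff y) rfl rfl
    _ = F x₀ := by rw [Finset.sum_ite_eq' Finset.univ x₀ F]; simp

lemma sum_powerset_reindex (L : Finset V) (g : Finset V → ℝ) :
    ∑ B ∈ L.powerset, g (L \ B) = ∑ S ∈ L.powerset, g S := by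
  refine Finset.sum_nbij' (fun B => L \ B) (fun S => L \ S) ?_ ?_ ?_ ?_ ?_
  · intro B hB; exact Finset.mem_powerset.2 (Finset.sdiff_subset)
  · intro S hS; exact Finset.mem_powerset.2 (Finset.sdiff_subset)
  · intro B hB; exact Finset.sdiff_sdiff_eq_self (Finset.mem_powerset.1 hB)
  · intro S hS; exact Finset.sdiff_sdiff_eq_self (Finset.mem_powerset.1 hS)
  · intro B hB; rfl

lemma prod_sub_one (L : Finset V) (f : V → ℝ) :
    ∏ v ∈ L, (f v - 1) = ∑ B ∈ L.powerset, (-1 : ℝ) ^ (L \ B).card * ∏ v ∈ B, f v := by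
  have h : ∏ v ∈ L, (f v - 1) = ∏ v ∈ L, (f v + (-1)) := by
    refine Finset.prod_congr rfl fun v _ => by ring
  rw [h, Finset.prod_add]
  refine Finset.sum_congr rfl fun B _ => ?_
  rw [Finset.prod_const]
  ring

lemma sum_powerset_prod_union (L N : Finset V) (hdisj : Disjoint L N) (t : V → ℝ) :
    ∑ C ∈ N.powerset, ∏ v ∈ L ∪ C, t v = (∏ v ∈ L, t v) * ∏ v ∈ N, (t v + 1) := by
  have h : ∀ C ∈ N.powerset, ∏ v ∈ L ∪ C, t v = (∏ v ∈ L, t v) * ∏ v ∈ C, t v := by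
    intro C hC
    exact Finset.prod_union (hdisj.mono_right (Finset.mem_powerset.1 hC))
  rw [Finset.sum_congr rfl h, ← Finset.mul_sum]
  congr 1
  rw [Finset.prod_add]
  refine (Finset.sum_congr rfl fun C _ => ?_).symm
  simp

lemma mll_sum_eq (d : V → ℕ) {L M : Finset V} (hLM : L ⊆ M) (F : Config V d → ℝ)
    (x : Config V d) :
    ∑ C ∈ (M \ L).powerset,
      ((∏ v ∈ M, ((d v + 2 : ℕ) : ℝ))⁻¹ *
        ∑ y : Config V d,
          if ∀ v ∉ M, y v = 0 then
            F y * ∏ v ∈ L ∪ C, (((d v + 2 : ℕ) : ℝ) * (if x v = y v then 1 else 0) - 1)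
          else 0)
    = ∑ S ∈ L.powerset,
        (-1 : ℝ) ^ S.card * (∏ v ∈ S, ((d v + 2 : ℕ) : ℝ))⁻¹ * Tsum d F M S x := by
  set D : V → ℝ := fun v => ((d v + 2 : ℕ) : ℝ) with hD
  have hDpos : ∀ v, 0 < D v := fun v => by positivity
  set N := M \ L with hN
  rw [← Finset.mul_sum, Finset.sum_comm]
  have step2 : ∀ y : Config V d,
      ∑ C ∈ N.powerset,
        (if ∀ v ∉ M, y v = 0 then
          F y * ∏ v ∈ L ∪ C, (D v * (if x v = y v then 1 else 0) - 1) else 0)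
      = ∑ B ∈ L.powerset,
          (if (∀ v ∉ M, y v = 0) ∧ (∀ v ∈ M \ (L \ B), y v = x v) then F y else 0)
            * ((-1 : ℝ) ^ (L \ B).card * (∏ v ∈ B, D v) * (∏ v ∈ N, D v)) := by
    intro y
    by_cases hy : ∀ v ∉ M, y v = 0
    · simp only [if_pos hy]
      rw [← Finset.mul_sum,
        sum_powerset_prod_union L N (Finset.disjoint_sdiff) (fun v => D v * (if x v = y v then 1 else 0) - 1)]
      have hplus : ∏ v ∈ N, ((D v * (if x v = y v then 1 else 0) - 1) + 1)
          = (∏ v ∈ N, D v) * (if ∀ v ∈ N, x v = y v then 1 else 0) := by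
        have : ∀ v ∈ N, (D v * (if x v = y v then 1 else 0) - 1) + 1
            = D v * (if x v = y v then 1 else 0) := fun v _ => by ring
        rw [Finset.prod_congr rfl this, Finset.prod_mul_distrib, Finset.prod_boole]
        congr
      have hLprod : ∏ v ∈ L, (D v * (if x v = y v then 1 else 0) - 1)
          = ∑ B ∈ L.powerset, (-1 : ℝ) ^ (L \ B).card *
              ((∏ v ∈ B, D v) * (if ∀ v ∈ B, x v = y v then 1 else 0)) := by
        rw [prod_sub_one L (fun v => D v * (if x v = y v then 1 else 0))]
        refine Finset.sum_congr rfl fun B _ => ?_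
        rw [Finset.prod_mul_distrib, Finset.prod_boole]
        congr
      rw [hplus, hLprod, Finset.sum_mul, Finset.mul_sum]
      refine Finset.sum_congr rfl fun B hB => ?_
      have hBL := Finset.mem_powerset.1 hB
      have hset : M \ (L \ B) = B ∪ N := by
        ext w
        simp only [Finset.mem_sdiff, Finset.mem_union, hN]
        constructor
        · rintro ⟨hwM, hw⟩
          by_cases hwB : w ∈ B
          · exact Or.inl hwB
          · by_cases hwL : w ∈ L
            · exact absurd ⟨hwL, hwB⟩ hw
            · exact Or.inr ⟨hwM, hwL⟩
        · rintro (hwB | ⟨hwM, hwL⟩)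
          · exact ⟨hLM (hBL hwB), fun h => h.2 hwB⟩
          · exact ⟨hwM, fun h => hwL h.1⟩
      have h3 : ((∀ v ∉ M, y v = 0) ∧ ∀ v ∈ B ∪ N, y v = x v)
          ↔ ((∀ v ∈ B, x v = y v) ∧ (∀ v ∈ N, x v = y v)) := by
        rw [and_iff_right hy, Finset.forall_mem_union]
        constructor
        · rintro ⟨h1, h2⟩
          exact ⟨fun v hv => (h1 v hv).symm, fun v hv => (h2 v hv).symm⟩
        · rintro ⟨h1, h2⟩
          exact ⟨fun v hv => (h1 v hv).symm, fun v hv => (h2 v hv).symm⟩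
      rw [hset, if_congr h3 rfl rfl]
      simp only [mul_ite, ite_mul, mul_zero, zero_mul, mul_one, one_mul]
      by_cases hc : (∀ v ∈ B, x v = y v) ∧ ∀ v ∈ N, x v = y v
      · rw [if_pos hc, if_pos hc.2, if_pos hc.1]
      · rw [if_neg hc]
        by_cases h2 : ∀ v ∈ N, x v = y v
        · by_cases h1 : ∀ v ∈ B, x v = y v
          · exact absurd ⟨h1, h2⟩ hc
          · rw [if_pos h2, if_neg h1]
        · rw [if_neg h2]
    · simp only [if_neg hy]
      rw [Finset.sum_const, smul_zero]
      refine (Finset.sum_eq_zero fun B _ => ?_).symm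
      rw [if_neg (fun h => hy h.1), zero_mul]
  rw [Finset.sum_congr rfl fun y _ => step2 y, Finset.sum_comm, ← sum_powerset_reindex L, Finset.mul_sum]
  refine Finset.sum_congr rfl fun B hB => ?_
  rw [← Finset.sum_mul, ← Tsum]
  have hBL : B ⊆ L := Finset.mem_powerset.1 hB
  have hML : (∏ v ∈ M, D v) = (∏ v ∈ L, D v) * ∏ v ∈ N, D v := by
    rw [← Finset.prod_union (Finset.disjoint_sdiff), Finset.union_sdiff_of_subset hLM]
  have hLB : (∏ v ∈ L, D v) = (∏ v ∈ B, D v) * ∏ v ∈ L \ B, D v := by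
    rw [← Finset.prod_union (Finset.disjoint_sdiff), Finset.union_sdiff_of_subset hBL]
  have hne : ∀ (S : Finset V), (∏ v ∈ S, D v) ≠ 0 :=
    fun S => Finset.prod_ne_zero_iff.2 fun v _ => (hDpos v).ne'
  rw [Finset.sdiff_sdiff_eq_self hBL]
  field_simp
  rw [hML, hLB]
  field_simp [hne]

/-- Version of `mll_sum_eq` stated with `mll`. -/
lemma mll_sum_eq' (d : V → ℕ) (p : Config V d → ℝ) {L M : Finset V} (hLM : L ⊆ M)
    (x : Config V d) :
    ∑ C ∈ (M \ L).powerset, mll d p (L ∪ C) M x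
    = ∑ S ∈ L.powerset,
        (-1 : ℝ) ^ S.card * (∏ v ∈ S, ((d v + 2 : ℕ) : ℝ))⁻¹ *
          Tsum d (fun y => Real.log (margin d p M y)) M S x := by
  refine (Finset.sum_congr rfl fun C _ => ?_).trans
    (mll_sum_eq d hLM (fun y => Real.log (margin d p M y)) x)
  rfl

end Aux

/-- if `p` and `q` are strictly positive distributions whose MLL parameters
`λ_A^M` agree for all `L ⊆ A ⊆ M`, and whose conditional distributions of `X_{L∖{v}}`
given `X_N` agree for every `v ∈ L` (where `N = M ∖ L`), then their conditional
distributions of `X_L` given `X_N` agree. -/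
theorem conditional_from_mll_and_lower (d : V → ℕ)
    (L M : Finset V) (hL : L.Nonempty) (hLM : L ⊆ M)
    (p q : Config V d → ℝ)
    (hppos : ∀ x, 0 < p x) (hpsum : ∑ x, p x = 1)
    (hqpos : ∀ x, 0 < q x) (hqsum : ∑ x, q x = 1)
    (ha : ∀ A : Finset V, L ⊆ A → A ⊆ M →
      ∀ x : Config V d, mll d p A M x = mll d q A M x)
    (hb : ∀ v ∈ L, ∀ x : Config V d,
      margin d p (L.erase v ∪ (M \ L)) x / margin d p (M \ L) x
        = margin d q (L.erase v ∪ (M \ L)) x / margin d q (M \ L) x) :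
    ∀ x : Config V d,
      margin d p M x / margin d p (M \ L) x
        = margin d q M x / margin d q (M \ L) x := by
  classical
  -- notation
  set G : Config V d → ℝ :=
    fun y => Real.log (margin d p M y) - Real.log (margin d q M y) with hG
  set c : Config V d → ℝ :=
    fun y => Real.log (margin d p (M \ L) y) - Real.log (margin d q (M \ L) y) with hc
  have hpMpos : ∀ x, 0 < margin d p M x := margin_pos hppos M
  have hqMpos : ∀ x, 0 < margin d q M x := margin_pos hqpos M
  have hpNpos : ∀ x, 0 < margin d p (M \ L) x := margin_pos hppos (M \ L)
  have hqNpos : ∀ x, 0 < margin d q (M \ L) x := margin_pos hqpos (M \ L)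
  -- Step 1: the alternating sum of the T-sums of G vanishes.
  have key1 : ∀ x : Config V d,
      ∑ S ∈ L.powerset,
        (-1 : ℝ) ^ S.card * (∏ v ∈ S, ((d v + 2 : ℕ) : ℝ))⁻¹ * Tsum d G M S x = 0 := by
    intro x
    have hsplit : ∀ S ∈ L.powerset,
        (-1 : ℝ) ^ S.card * (∏ v ∈ S, ((d v + 2 : ℕ) : ℝ))⁻¹ * Tsum d G M S x
        = (-1 : ℝ) ^ S.card * (∏ v ∈ S, ((d v + 2 : ℕ) : ℝ))⁻¹ *
              Tsum d (fun y => Real.log (margin d p M y)) M S x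
          - (-1 : ℝ) ^ S.card * (∏ v ∈ S, ((d v + 2 : ℕ) : ℝ))⁻¹ *
              Tsum d (fun y => Real.log (margin d q M y)) M S x := by
      intro S _
      rw [hG, Tsum_sub]
      ring
    rw [Finset.sum_congr rfl hsplit, Finset.sum_sub_distrib,
      ← mll_sum_eq' d p hLM x, ← mll_sum_eq' d q hLM x]
    rw [Finset.sum_congr rfl fun C hC => ha (L ∪ C) Finset.subset_union_left
      (Finset.union_subset hLM ((Finset.mem_powerset.1 hC).trans Finset.sdiff_subset)) x]
    rw [sub_self]
  -- Step 2: decomposition of G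
  have key2 : ∀ x : Config V d,
      G x = - ∑ S ∈ L.powerset.erase ∅,
        (-1 : ℝ) ^ S.card * (∏ v ∈ S, ((d v + 2 : ℕ) : ℝ))⁻¹ * Tsum d G M S x := by
    intro x
    have h0 := key1 x
    rw [← Finset.add_sum_erase _ _ (Finset.empty_mem_powerset L)] at h0
    have hT0 : Tsum d G M ∅ x = G x := by
      rw [Tsum_empty]
      have hagree : ∀ v ∈ M, (fun w => if w ∈ M then x w else (0 : Fin (d w + 2))) v = x v :=
        fun v hv => if_pos hv
      rw [hG]
      simp only []
      rw [margin_congr p hagree, margin_congr q hagree]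
    rw [Finset.card_empty, pow_zero, Finset.prod_empty, inv_one, mul_one, one_mul, hT0] at h0
    linarith
  -- Step 3: sum of (r - s) * G vanishes
  have S1 : ∑ x : Config V d,
      (margin d p M x / margin d p (M \ L) x - margin d q M x / margin d q (M \ L) x) * G x
      = 0 := by
    have hterm : ∀ x : Config V d,
        (margin d p M x / margin d p (M \ L) x - margin d q M x / margin d q (M \ L) x) * G x
        = ∑ S ∈ L.powerset.erase ∅,
            (-((-1 : ℝ) ^ S.card * (∏ v ∈ S, ((d v + 2 : ℕ) : ℝ))⁻¹)) *
              ((margin d p M x / margin d p (M \ L) x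
                - margin d q M x / margin d q (M \ L) x) * Tsum d G M S x) := by
      intro x
      rw [key2 x, mul_neg, Finset.mul_sum, ← Finset.sum_neg_distrib]
      exact Finset.sum_congr rfl fun S _ => by ring
    rw [Finset.sum_congr rfl fun x _ => hterm x, Finset.sum_comm]
    refine Finset.sum_eq_zero fun S hS => ?_
    obtain ⟨v, hvS⟩ := Finset.nonempty_iff_ne_empty.2 (Finset.ne_of_mem_erase hS)
    have hvL : v ∈ L := (Finset.mem_powerset.1 (Finset.mem_of_mem_erase hS)) hvS
    rw [← Finset.mul_sum,
      keyZ hLM p q hb hvL (fun x => Tsum d G M S x) (fun x a => Tsum_update G hvS x a),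
      mul_zero]
  -- Step 4: sum of (r - s) * c vanishes
  have S2 : ∑ x : Config V d,
      (margin d p M x / margin d p (M \ L) x - margin d q M x / margin d q (M \ L) x) * c x
      = 0 := by
    obtain ⟨v, hvL⟩ := hL
    have hvN : v ∉ M \ L := fun h => (Finset.mem_sdiff.1 h).2 hvL
    refine keyZ hLM p q hb hvL c fun x a => ?_
    rw [hc]
    simp only []
    rw [margin_update p hvN, margin_update q hvN]
  -- Step 5: sum of (r - s) * (G - c) vanishes
  have S3 : ∑ x : Config V d,
      (margin d p M x / margin d p (M \ L) x - margin d q M x / margin d q (M \ L) x)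
        * (G x - c x) = 0 := by
    have : ∀ x : Config V d,
        (margin d p M x / margin d p (M \ L) x - margin d q M x / margin d q (M \ L) x)
          * (G x - c x)
        = (margin d p M x / margin d p (M \ L) x - margin d q M x / margin d q (M \ L) x) * G x
          - (margin d p M x / margin d p (M \ L) x - margin d q M x / margin d q (M \ L) x) * c x :=
      fun x => by ring
    rw [Finset.sum_congr rfl fun x _ => this x, Finset.sum_sub_distrib, S1, S2, sub_zero]
  -- Step 6: pointwise identities
  have hlog : ∀ x : Config V d,
      G x - c x = Real.log (margin d p M x / margin d p (M \ L) x)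
        - Real.log (margin d q M x / margin d q (M \ L) x) := by
    intro x
    rw [Real.log_div (hpMpos x).ne' (hpNpos x).ne', Real.log_div (hqMpos x).ne' (hqNpos x).ne',
      hG, hc]
    ring
  have hexp : ∀ x : Config V d,
      margin d p M x / margin d p (M \ L) x
      = (margin d q M x / margin d q (M \ L) x) * Real.exp (G x - c x) := by
    intro x
    rw [hlog x, Real.exp_sub, Real.exp_log (div_pos (hpMpos x) (hpNpos x)),
      Real.exp_log (div_pos (hqMpos x) (hqNpos x)), mul_comm]
    exact (div_mul_cancel₀ _ (div_pos (hqMpos x) (hqNpos x)).ne').symm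
  have hnonneg : ∀ x : Config V d,
      0 ≤ (margin d p M x / margin d p (M \ L) x - margin d q M x / margin d q (M \ L) x)
        * (G x - c x) := by
    intro x
    have hs : 0 < margin d q M x / margin d q (M \ L) x := div_pos (hqMpos x) (hqNpos x)
    rw [hexp x]
    have hfact : margin d q M x / margin d q (M \ L) x * Real.exp (G x - c x)
        - margin d q M x / margin d q (M \ L) x
        = (margin d q M x / margin d q (M \ L) x) * (Real.exp (G x - c x) - 1) := by ring
    rw [hfact, mul_assoc]
    refine mul_nonneg hs.le ?_
    rcases le_or_gt 0 (G x - c x) with ht | ht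
    · exact mul_nonneg (sub_nonneg.2 (Real.one_le_exp_iff.2 ht)) ht
    · exact (mul_pos_of_neg_of_neg (sub_neg.2 (Real.exp_lt_one_iff.2 ht)) ht).le
  -- Step 7: conclude pointwise
  intro x
  have hzero : (margin d p M x / margin d p (M \ L) x
      - margin d q M x / margin d q (M \ L) x) * (G x - c x) = 0 :=
    (Finset.sum_eq_zero_iff_of_nonneg fun y _ => hnonneg y).1 S3 x (Finset.mem_univ x)
  have ht0 : G x - c x = 0 := by
    by_contra ht
    have hs : 0 < margin d q M x / margin d q (M \ L) x := div_pos (hqMpos x) (hqNpos x)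
    rcases lt_or_gt_of_ne ht with hlt | hgt
    · have h1 : Real.exp (G x - c x) - 1 < 0 := sub_neg.2 (Real.exp_lt_one_iff.2 hlt)
      have : 0 < (margin d p M x / margin d p (M \ L) x
          - margin d q M x / margin d q (M \ L) x) * (G x - c x) := by
        rw [hexp x]
        have : margin d q M x / margin d q (M \ L) x * Real.exp (G x - c x)
            - margin d q M x / margin d q (M \ L) x
            = (margin d q M x / margin d q (M \ L) x) * (Real.exp (G x - c x) - 1) := by ring
        rw [this, mul_assoc]
        exact mul_pos hs (mul_pos_of_neg_of_neg h1 hlt)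
      exact absurd hzero this.ne'
    · have h1 : 0 < Real.exp (G x - c x) - 1 := by
        have : (1 : ℝ) < Real.exp (G x - c x) := by
          calc (1 : ℝ) = Real.exp 0 := Real.exp_zero.symm
            _ < Real.exp (G x - c x) := Real.exp_lt_exp.2 hgt
        linarith
      have : 0 < (margin d p M x / margin d p (M \ L) x
          - margin d q M x / margin d q (M \ L) x) * (G x - c x) := by
        rw [hexp x]
        have heq : margin d q M x / margin d q (M \ L) x * Real.exp (G x - c x)
            - margin d q M x / margin d q (M \ L) x
            = (margin d q M x / margin d q (M \ L) x) * (Real.exp (G x - c x) - 1) := by ring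
        rw [heq, mul_assoc]
        exact mul_pos hs (mul_pos h1 hgt)
      exact absurd hzero this.ne'
  have hfin : Real.log (margin d p M x / margin d p (M \ L) x)
      = Real.log (margin d q M x / margin d q (M \ L) x) := by
    have := hlog x
    rw [ht0] at this
    linarith
  calc margin d p M x / margin d p (M \ L) x
      = Real.exp (Real.log (margin d p M x / margin d p (M \ L) x)) :=
        (Real.exp_log (div_pos (hpMpos x) (hpNpos x))).symm
    _ = Real.exp (Real.log (margin d q M x / margin d q (M \ L) x)) := by rw [hfin]
    _ = margin d q M x / margin d q (M \ L) x := Real.exp_log (div_pos (hqMpos x) (hqNpos x))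
end

section
/- Let G be an acyclic directed mixed graph on a finite vertex set V with finite state spaces X_v of size at least 2, let Ḡ be a head-preserving completion of G, and let H be a head of G with tail T = tail_G(H) in G and tail T̄ = tail_{Ḡ}(H) in Ḡ. Then every strictly positive probability distribution p on X_V satisfying the global Markov property for G satisfies X_H ⊥ X_{T̄∖T} | X_T [p]. -/
open Finset

open scoped Classical

variable {V : Type} [Fintype V] [DecidableEq V]

/-- An acyclic directed mixed graph (ADMG): directed edges `dir` and a symmetric
irreflexive set of bidirected edges `bi`, with no directed cycle. -/
structure ADMG (V : Type) [Fintype V] [DecidableEq V] where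
  dir : V → V → Prop
  bi : V → V → Prop
  bi_symm : ∀ {v w}, bi v w → bi w v
  bi_irrefl : ∀ v, ¬ bi v v
  acyclic : ∀ v, ¬ Relation.TransGen dir v v

namespace ADMG

/-- Ancestors of (members of) `A`: vertices `w` with `w = a` or a directed path `w → ⋯ → a`
for some `a ∈ A`. -/
noncomputable def anc (G : ADMG V) (A : Finset V) : Finset V :=
  univ.filter fun w => ∃ a ∈ A, Relation.ReflTransGen G.dir w a

/-- Descendants of (members of) `A`. -/
noncomputable def dec (G : ADMG V) (A : Finset V) : Finset V :=
  univ.filter fun w => ∃ a ∈ A, Relation.ReflTransGen G.dir a w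

/-- Parents of (members of) `A`. -/
noncomputable def pa (G : ADMG V) (A : Finset V) : Finset V :=
  univ.filter fun w => ∃ a ∈ A, G.dir w a

/-- `barren_G(U)`: members of `U` with no non-trivial descendant in `U`. -/
noncomputable def barren (G : ADMG V) (U : Finset V) : Finset V :=
  U.filter fun v => G.dec {v} ∩ U = {v}

/-- `U` is barren if `barren_G(U) = U`. -/
def IsBarren (G : ADMG V) (U : Finset V) : Prop := G.barren U = U

/-- One bidirected step inside the induced subgraph `G_S`. -/
def biStep (G : ADMG V) (S : Finset V) (u w : V) : Prop :=
  u ∈ S ∧ w ∈ S ∧ G.bi u w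

/-- District of (members of) `A` in the induced subgraph `G_S`: vertices joined to a member
of `A` by a (possibly empty) bidirected path within `S`. -/
noncomputable def disIn (G : ADMG V) (S A : Finset V) : Finset V :=
  univ.filter fun w => ∃ a ∈ A, a ∈ S ∧ w ∈ S ∧ Relation.ReflTransGen (G.biStep S) a w

/-- District in the whole graph. -/
noncomputable def dis (G : ADMG V) (A : Finset V) : Finset V := G.disIn univ A

/-- A head: a nonempty barren set connected by bidirected paths in `G_{an_G(H)}`. -/
def IsHead (G : ADMG V) (H : Finset V) : Prop :=
  H.Nonempty ∧ G.IsBarren H ∧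
    ∀ a ∈ H, ∀ b ∈ H, Relation.ReflTransGen (G.biStep (G.anc H)) a b

/-- The tail of a head: `tail_G(H) = pa_G(D) ∪ (D ∖ H)` where `D = dis_{G_{an(H)}}(H)`. -/
noncomputable def tail (G : ADMG V) (H : Finset V) : Finset V :=
  G.pa (G.disIn (G.anc H) H) ∪ (G.disIn (G.anc H) H \ H)

end ADMG

/-- `Gbar` is a head-preserving completion of `G`: a complete supergraph (on the same
vertices) in which every head of `G` is still a head. -/
def IsHPC (G Gbar : ADMG V) : Prop :=
  (∀ v w, G.dir v w → Gbar.dir v w) ∧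
  (∀ v w, G.bi v w → Gbar.bi v w) ∧
  (∀ v w : V, v ≠ w → Gbar.dir v w ∨ Gbar.dir w v ∨ Gbar.bi v w) ∧
  (∀ H : Finset V, G.IsHead H → Gbar.IsHead H)

/-- Type of an edge on a path, read from left to right:
`u → w`, `u ← w`, or `u ↔ w`. -/
inductive EdgeType : Type
  | toRight
  | toLeft
  | biE

/-- The edge of the given type is present in `G` between `u` (left) and `w` (right). -/
def edgeOK (G : ADMG V) : EdgeType → V → V → Prop
  | .toRight, u, w => G.dir u w
  | .toLeft,  u, w => G.dir w u
  | .biE,     u, w => G.bi u w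

/-- The edge has an arrowhead at its right endpoint. -/
def arrowAtRight : EdgeType → Prop
  | .toRight => True
  | .toLeft  => False
  | .biE     => True

/-- The edge has an arrowhead at its left endpoint. -/
def arrowAtLeft : EdgeType → Prop
  | .toRight => False
  | .toLeft  => True
  | .biE     => True

/-- A path from `x` to `y` in the mixed graph `G`: distinct vertices `f 0, …, f n`
joined by edges of the recorded types. -/
structure GPath (G : ADMG V) (x y : V) where
  n : ℕ
  f : Fin (n + 1) → V
  inj : Function.Injective f
  first : f 0 = x
  last : f (Fin.last n) = y
  e : Fin n → EdgeType
  ok : ∀ i : Fin n, edgeOK G (e i) (f i.castSucc) (f i.succ)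

/-- The interior vertex `f (i+1)` is a collider on the path: both incident edges
have an arrowhead at it. -/
def GPath.colliderAt {G : ADMG V} {x y : V} (w : GPath G x y)
    (i : ℕ) (h : i + 1 < w.n) : Prop :=
  arrowAtRight (w.e ⟨i, by omega⟩) ∧ arrowAtLeft (w.e ⟨i + 1, h⟩)

/-- The path is blocked by `C`: some interior non-collider is in `C`, or some interior
collider is outside `an_G(C)`. -/
def GPath.Blocked {G : ADMG V} {x y : V} (w : GPath G x y) (C : Finset V) : Prop :=
  ∃ (i : ℕ) (h : i + 1 < w.n),
    (¬ w.colliderAt i h ∧ w.f ⟨i + 1, by omega⟩ ∈ C) ∨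
    (w.colliderAt i h ∧ w.f ⟨i + 1, by omega⟩ ∉ G.anc C)

/-- m-separation of `A` and `B` given `C` in `G`. -/
def MSep (G : ADMG V) (A B C : Finset V) : Prop :=
  ∀ a ∈ A, ∀ b ∈ B, ∀ w : GPath G a b, w.Blocked C

/-- The global Markov property: m-separation implies conditional independence. -/
def GlobalMarkov (G : ADMG V) (d : V → ℕ) (p : Config V d → ℝ) : Prop :=
  ∀ A B C : Finset V, Disjoint A B → Disjoint A C → Disjoint B C →
    MSep G A B C → CondIndep d p A B C


section AuxProof

lemma ADMG.mem_anc' {G : ADMG V} {A : Finset V} {w : V} :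
    w ∈ G.anc A ↔ ∃ a ∈ A, Relation.ReflTransGen G.dir w a := by
  simp [ADMG.anc]

lemma ADMG.mem_pa' {G : ADMG V} {A : Finset V} {w : V} :
    w ∈ G.pa A ↔ ∃ a ∈ A, G.dir w a := by
  simp [ADMG.pa]

lemma ADMG.mem_disIn' {G : ADMG V} {S A : Finset V} {w : V} :
    w ∈ G.disIn S A ↔ ∃ a ∈ A, a ∈ S ∧ w ∈ S ∧ Relation.ReflTransGen (G.biStep S) a w := by
  simp [ADMG.disIn]

lemma ADMG.no_cycle (G : ADMG V) {x y : V} (hxy : Relation.ReflTransGen G.dir x y)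
    (hyx : Relation.ReflTransGen G.dir y x) (hne : x ≠ y) : False := by
  rcases hxy.cases_head with rfl | ⟨z, hxz, hzy⟩
  · exact hne rfl
  · exact G.acyclic x (Relation.TransGen.head' hxz (hzy.trans hyx))

lemma barren_spec {G : ADMG V} {U : Finset V} (h : G.IsBarren U) :
    ∀ u ∈ U, ∀ x ∈ U, Relation.ReflTransGen G.dir u x → x = u := by
  intro u hu x hx hux
  have hP := Finset.filter_eq_self.1 h u hu
  have hx2 : x ∈ G.dec {u} ∩ U := by
    refine Finset.mem_inter.2 ⟨?_, hx⟩
    simp only [ADMG.dec, Finset.mem_filter, Finset.mem_univ, true_and]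
    exact ⟨u, Finset.mem_singleton_self u, hux⟩
  rw [hP] at hx2
  simpa using hx2

lemma biStep_rtg_symm (G : ADMG V) (S : Finset V) {x y : V}
    (h : Relation.ReflTransGen (G.biStep S) x y) :
    Relation.ReflTransGen (G.biStep S) y x :=
  by
    haveI : Std.Symm (G.biStep S) := ⟨fun _ _ hab => ⟨hab.2.1, hab.1, G.bi_symm hab.2.2⟩⟩
    exact Std.Symm.symm _ _ h

lemma H_sub_anc {G : ADMG V} {H : Finset V} {h : V} (hh : h ∈ H) : h ∈ G.anc H :=
  ADMG.mem_anc'.2 ⟨h, hh, Relation.ReflTransGen.refl⟩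

lemma H_sub_dis {G : ADMG V} {H : Finset V} {h : V} (hh : h ∈ H) :
    h ∈ G.disIn (G.anc H) H :=
  ADMG.mem_disIn'.2 ⟨h, hh, H_sub_anc hh, H_sub_anc hh, Relation.ReflTransGen.refl⟩

lemma dis_sub_anc {G : ADMG V} {H : Finset V} {x : V} (hx : x ∈ G.disIn (G.anc H) H) :
    x ∈ G.anc H := by
  rcases ADMG.mem_disIn'.1 hx with ⟨a, _, _, hxS, _⟩
  exact hxS

lemma tail_sub_anc {G : ADMG V} {H : Finset V} {x : V} (hx : x ∈ G.tail H) :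
    x ∈ G.anc H := by
  rcases Finset.mem_union.1 hx with hx | hx
  · rcases ADMG.mem_pa'.1 hx with ⟨dd, hd, hdir⟩
    rcases ADMG.mem_anc'.1 (dis_sub_anc hd) with ⟨h1, hh1, hp⟩
    exact ADMG.mem_anc'.2 ⟨h1, hh1, Relation.ReflTransGen.head hdir hp⟩
  · exact dis_sub_anc (Finset.mem_sdiff.1 hx).1

lemma anc_tail_sub {G : ADMG V} {H : Finset V} {x : V} (hx : x ∈ G.anc (G.tail H)) :
    x ∈ G.anc H := by
  rcases ADMG.mem_anc'.1 hx with ⟨t, ht, hxt⟩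
  rcases ADMG.mem_anc'.1 (tail_sub_anc ht) with ⟨h1, hh1, hth⟩
  exact ADMG.mem_anc'.2 ⟨h1, hh1, hxt.trans hth⟩

lemma dis_ext {G : ADMG V} {H : Finset V} {dd w : V} (hd : dd ∈ G.disIn (G.anc H) H)
    (hbi : G.bi dd w) (hw : w ∈ G.anc H) : w ∈ G.disIn (G.anc H) H := by
  rcases ADMG.mem_disIn'.1 hd with ⟨a, ha, haS, hdS, hp⟩
  exact ADMG.mem_disIn'.2 ⟨a, ha, haS, hw, hp.tail ⟨hdS, hw, hbi⟩⟩

lemma tail_disj_head {G : ADMG V} {H : Finset V} (hH : G.IsHead H) {b : V}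
    (hb : b ∈ G.tail H) : b ∉ H := by
  intro hbH
  rcases Finset.mem_union.1 hb with hb | hb
  · rcases ADMG.mem_pa'.1 hb with ⟨dd, hd, hdir⟩
    rcases ADMG.mem_anc'.1 (dis_sub_anc hd) with ⟨h1, hh1, hdh⟩
    have h1b : h1 = b :=
      barren_spec hH.2.1 b hbH h1 hh1 (Relation.ReflTransGen.head hdir hdh)
    exact G.acyclic b (Relation.TransGen.head' hdir (h1b ▸ hdh))
  · exact (Finset.mem_sdiff.1 hb).2 hbH

lemma claimK {G Gbar : ADMG V} (hhpc : IsHPC G Gbar) {H : Finset V} (hH : G.IsHead H)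
    {u : V} (hu1 : u ∉ G.anc H) (hu2 : ∀ h ∈ H, ¬ Relation.ReflTransGen G.dir h u)
    {dd : V} (hd : dd ∈ G.disIn (G.anc H) H) (hbi : G.bi dd u)
    (hub : ∃ h1 ∈ H, Relation.ReflTransGen Gbar.dir u h1) : False := by
  have huH : u ∉ H := fun h => hu1 (H_sub_anc h)
  have hanc : ∀ {x : V}, x ∈ G.anc H → x ∈ G.anc (insert u H) := by
    intro x hx
    rcases ADMG.mem_anc'.1 hx with ⟨h1, hh1, hp⟩
    exact ADMG.mem_anc'.2 ⟨h1, Finset.mem_insert_of_mem hh1, hp⟩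
  have huS : u ∈ G.anc (insert u H) :=
    ADMG.mem_anc'.2 ⟨u, Finset.mem_insert_self u H, Relation.ReflTransGen.refl⟩
  have hmono : ∀ {x y : V}, Relation.ReflTransGen (G.biStep (G.anc H)) x y →
      Relation.ReflTransGen (G.biStep (G.anc (insert u H))) x y :=
    fun h => Relation.ReflTransGen.mono
      (fun _ _ hab => ⟨hanc hab.1, hanc hab.2.1, hab.2.2⟩) _ _ h
  rcases ADMG.mem_disIn'.1 hd with ⟨a0, ha0, _, hdS, hp0⟩
  have huconn : ∀ b ∈ H, Relation.ReflTransGen (G.biStep (G.anc (insert u H))) u b := by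
    intro b hb
    have h1 : Relation.ReflTransGen (G.biStep (G.anc (insert u H))) u dd :=
      Relation.ReflTransGen.single ⟨huS, hanc hdS, G.bi_symm hbi⟩
    have h2 := hmono (biStep_rtg_symm G _ hp0)
    have h3 := hmono (hH.2.2 a0 ha0 b hb)
    exact (h1.trans h2).trans h3
  have hhead : G.IsHead (insert u H) := by
    refine ⟨⟨u, Finset.mem_insert_self u H⟩, ?_, ?_⟩
    · apply Finset.filter_eq_self.2
      intro x hx
      apply Finset.ext
      intro y
      simp only [Finset.mem_inter, Finset.mem_singleton]
      constructor
      · rintro ⟨hy1, hy2⟩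
        have hy1' : Relation.ReflTransGen G.dir x y := by
          simp only [ADMG.dec, Finset.mem_filter, Finset.mem_univ, true_and] at hy1
          rcases hy1 with ⟨a, ha, hp⟩
          rcases Finset.mem_singleton.1 ha with rfl
          exact hp
        rcases Finset.mem_insert.1 hx with rfl | hxH
        · rcases Finset.mem_insert.1 hy2 with rfl | hyH
          · rfl
          · exact absurd (ADMG.mem_anc'.2 ⟨y, hyH, hy1'⟩) hu1
        · rcases Finset.mem_insert.1 hy2 with rfl | hyH
          · exact absurd hy1' (hu2 x hxH)
          · exact barren_spec hH.2.1 x hxH y hyH hy1'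
      · rintro rfl
        refine ⟨?_, hx⟩
        simp only [ADMG.dec, Finset.mem_filter, Finset.mem_univ, true_and]
        exact ⟨y, Finset.mem_singleton_self y, Relation.ReflTransGen.refl⟩
    · intro a ha b hb
      rcases Finset.mem_insert.1 ha with rfl | haH
      · rcases Finset.mem_insert.1 hb with rfl | hbH
        · exact Relation.ReflTransGen.refl
        · exact huconn b hbH
      · rcases Finset.mem_insert.1 hb with rfl | hbH
        · exact biStep_rtg_symm G _ (huconn a haH)
        · exact hmono (hH.2.2 a haH b hbH)
  have hheadbar := hhpc.2.2.2 _ hhead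
  rcases hub with ⟨h1, hh1, hp⟩
  have h1u := barren_spec hheadbar.2.1 u (Finset.mem_insert_self u H) h1
    (Finset.mem_insert_of_mem hh1) hp
  exact huH (h1u ▸ hh1)

end AuxProof


lemma blocked_main {G Gbar : ADMG V} (hhpc : IsHPC G Gbar) {H : Finset V} (hH : G.IsHead H)
    {v : V} (hvT : v ∉ G.tail H) (hvH : v ∉ H)
    (hvdec : ∀ h ∈ H, ¬ Relation.ReflTransGen G.dir h v)
    (hvanc : ∃ h1 ∈ H, Relation.ReflTransGen Gbar.dir v h1)
    {a : V} (ha : a ∈ H) (w : GPath G a v) : w.Blocked (G.tail H) := by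
  classical
  have hDT : ∀ x, x ∈ G.disIn (G.anc H) H → x ∉ H → x ∈ G.tail H := fun x hx hxH =>
    Finset.mem_union.2 (Or.inr (Finset.mem_sdiff.2 ⟨hx, hxH⟩))
  have hpaT : ∀ x, x ∈ G.pa (G.disIn (G.anc H) H) → x ∈ G.tail H := fun x hx =>
    Finset.mem_union.2 (Or.inl hx)
  have condE : ∀ dd ∈ G.disIn (G.anc H) H, ¬ G.bi dd v := by
    intro dd hdd hbi
    by_cases hv : v ∈ G.anc H
    · exact hvT (hDT v (dis_ext hdd hbi hv) hvH)
    · exact claimK hhpc hH hv hvdec hdd hbi hvanc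
  by_contra hnb
  have hNC : ∀ (j k : ℕ) (hj : j + 1 < w.n) (hk : k < w.n + 1), j + 1 = k →
      ¬ w.colliderAt j hj → w.f ⟨k, hk⟩ ∉ G.tail H := by
    intro j k hj hk hjk h1 h2
    subst hjk
    exact hnb ⟨j, hj, Or.inl ⟨h1, h2⟩⟩
  have hCO : ∀ (j k : ℕ) (hj : j + 1 < w.n) (hk : k < w.n + 1), j + 1 = k →
      w.colliderAt j hj → w.f ⟨k, hk⟩ ∈ G.anc H := by
    intro j k hj hk hjk h1
    subst hjk
    by_contra h2
    exact hnb ⟨j, hj, Or.inr ⟨h1, fun hmem => h2 (anc_tail_sub hmem)⟩⟩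
  have eAt : ∀ (j k : ℕ) (hj : j < w.n) (hk : k < w.n), j = k →
      w.e ⟨j, hj⟩ = w.e ⟨k, hk⟩ := by
    intro j k hj hk h; subst h; rfl
  have hn0 : 0 < w.n := by
    rcases Nat.eq_zero_or_pos w.n with h0 | h
    · exfalso
      have h1 : Fin.last w.n = (0 : Fin (w.n + 1)) := by
        apply Fin.ext; simp [Fin.last, h0]
      have h2 := w.last
      rw [h1, w.first] at h2
      exact hvH (h2 ▸ ha)
    · exact h
  have key : ∀ m : ℕ, ∀ i : ℕ, i + m = w.n → ∀ hi : i < w.n,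
      ((w.f ⟨i, by omega⟩ ∈ G.disIn (G.anc H) H ∧ (w.f ⟨i, by omega⟩ ∈ H ∨
          ∃ _ : 0 < i, arrowAtRight (w.e ⟨i - 1, by omega⟩))) ∨
       (∃ _ : 0 < i, arrowAtRight (w.e ⟨i - 1, by omega⟩) ∧
          ∃ x : V, ((∃ h0 ∈ H, G.dir h0 x) ∨
              (x ∉ G.anc H ∧ ∃ dd ∈ G.disIn (G.anc H) H, G.bi dd x)) ∧
            Relation.ReflTransGen G.dir x (w.f ⟨i, by omega⟩))) → False := by
    intro m
    induction m with
    | zero => intro i him hi _; omega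
    | succ m ih =>
      intro i him hi hInv
      have hok := w.ok ⟨i, hi⟩
      have hend : i + 1 = w.n → ∀ p : i + 1 < w.n + 1, w.f ⟨i + 1, p⟩ = v := by
        intro h p
        have he1 : (⟨i + 1, p⟩ : Fin (w.n + 1)) = Fin.last w.n := by
          apply Fin.ext; simp [h, Fin.last]
        rw [he1, w.last]
      rcases hInv with ⟨hiD, hAB⟩ | ⟨hi0, harr, x, hPx, hrtg⟩
      · -- state AB
        cases he : w.e ⟨i, hi⟩ with
        | toRight =>
          rw [he] at hok
          have hdir : G.dir (w.f ⟨i, by omega⟩) (w.f ⟨i + 1, by omega⟩) := hok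
          by_cases hiH : w.f ⟨i, by omega⟩ ∈ H
          · by_cases hlast : i + 1 = w.n
            · rw [hend hlast] at hdir
              exact hvdec _ hiH (Relation.ReflTransGen.single hdir)
            · refine ih (i + 1) (by omega) (by omega) (Or.inr ⟨by omega, ?_, ?_⟩)
              · show arrowAtRight (w.e ⟨i, hi⟩)
                rw [he]; trivial
              · exact ⟨w.f ⟨i + 1, by omega⟩, Or.inl ⟨_, hiH, hdir⟩,
                  Relation.ReflTransGen.refl⟩
          · rcases hAB with hiH' | ⟨hi0, harr⟩
            · exact hiH hiH'
            · have hj : (i - 1) + 1 < w.n := by omega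
              have hncol : ¬ w.colliderAt (i - 1) hj := by
                intro hc
                have h1 : arrowAtLeft (w.e ⟨i - 1 + 1, hj⟩) := hc.2
                rw [eAt (i - 1 + 1) i hj hi (by omega), he] at h1
                exact h1
              exact hNC (i - 1) i hj (by omega) (by omega) hncol (hDT _ hiD hiH)
        | toLeft =>
          rw [he] at hok
          have hpa : w.f ⟨i + 1, by omega⟩ ∈ G.pa (G.disIn (G.anc H) H) :=
            ADMG.mem_pa'.2 ⟨_, hiD, hok⟩
          by_cases hlast : i + 1 = w.n
          · rw [hend hlast] at hpa
            exact hvT (hpaT _ hpa)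
          · have hi1 : i + 1 < w.n := by omega
            have hncol : ¬ w.colliderAt i hi1 := by
              intro hc
              have h1 : arrowAtRight (w.e ⟨i, hi⟩) := hc.1
              rw [he] at h1
              exact h1
            exact hNC i (i + 1) hi1 (by omega) rfl hncol (hpaT _ hpa)
        | biE =>
          rw [he] at hok
          have hbi1 : G.bi (w.f ⟨i, by omega⟩) (w.f ⟨i + 1, by omega⟩) := hok
          by_cases hlast : i + 1 = w.n
          · rw [hend hlast] at hbi1
            exact condE _ hiD hbi1
          · have hi1 : i + 1 < w.n := by omega
            by_cases hcolL : arrowAtLeft (w.e ⟨i + 1, hi1⟩)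
            · have hc : w.colliderAt i hi1 := by
                refine ⟨?_, hcolL⟩
                show arrowAtRight (w.e ⟨i, hi⟩)
                rw [he]; trivial
              have hmem := hCO i (i + 1) hi1 (by omega) rfl hc
              have hD1 : w.f ⟨i + 1, by omega⟩ ∈ G.disIn (G.anc H) H :=
                dis_ext hiD hbi1 hmem
              refine ih (i + 1) (by omega) hi1 (Or.inl ⟨hD1, Or.inr ⟨by omega, ?_⟩⟩)
              show arrowAtRight (w.e ⟨i, hi⟩)
              rw [he]; trivial
            · have hncol : ¬ w.colliderAt i hi1 := fun hc => hcolL hc.2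
              by_cases hH1 : w.f ⟨i + 1, by omega⟩ ∈ H
              · exact ih (i + 1) (by omega) hi1 (Or.inl ⟨H_sub_dis hH1, Or.inl hH1⟩)
              · by_cases hanc1 : w.f ⟨i + 1, by omega⟩ ∈ G.anc H
                · exact hNC i (i + 1) hi1 (by omega) rfl hncol
                    (hDT _ (dis_ext hiD hbi1 hanc1) hH1)
                · refine ih (i + 1) (by omega) hi1 (Or.inr ⟨by omega, ?_,
                    w.f ⟨i + 1, by omega⟩, Or.inr ⟨hanc1, _, hiD, hbi1⟩,
                    Relation.ReflTransGen.refl⟩)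
                  show arrowAtRight (w.e ⟨i, hi⟩)
                  rw [he]; trivial
      · -- state CW
        by_cases hcolL : arrowAtLeft (w.e ⟨i, hi⟩)
        · have hj : (i - 1) + 1 < w.n := by omega
          have hc : w.colliderAt (i - 1) hj := by
            refine ⟨harr, ?_⟩
            rw [eAt (i - 1 + 1) i hj hi (by omega)]
            exact hcolL
          have hmem : w.f ⟨i, by omega⟩ ∈ G.anc H :=
            hCO (i - 1) i hj (by omega) (by omega) hc
          rcases ADMG.mem_anc'.1 hmem with ⟨h1, hh1, hp1⟩
          have hx_anc : x ∈ G.anc H := ADMG.mem_anc'.2 ⟨h1, hh1, hrtg.trans hp1⟩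
          rcases hPx with ⟨h0, hh0, hdir0⟩ | ⟨hxna, _⟩
          · rcases ADMG.mem_anc'.1 hx_anc with ⟨h2, hh2, hp2⟩
            have h20 : h2 = h0 :=
              barren_spec hH.2.1 h0 hh0 h2 hh2 (Relation.ReflTransGen.head hdir0 hp2)
            exact G.acyclic h0 (Relation.TransGen.head' hdir0 (h20 ▸ hp2))
          · exact hxna hx_anc
        · have he' : w.e ⟨i, hi⟩ = EdgeType.toRight := by
            cases he : w.e ⟨i, hi⟩ with
            | toRight => rfl
            | toLeft => rw [he] at hcolL; exact absurd trivial hcolL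
            | biE => rw [he] at hcolL; exact absurd trivial hcolL
          rw [he'] at hok
          have hdir : G.dir (w.f ⟨i, by omega⟩) (w.f ⟨i + 1, by omega⟩) := hok
          have hrtg1 : Relation.ReflTransGen G.dir x (w.f ⟨i + 1, by omega⟩) :=
            hrtg.tail hdir
          by_cases hlast : i + 1 = w.n
          · rw [hend hlast] at hrtg1
            rcases hPx with ⟨h0, hh0, hdir0⟩ | ⟨hxna, dd, hdd, hbix⟩
            · exact hvdec h0 hh0 (Relation.ReflTransGen.head hdir0 hrtg1)
            · by_cases hxd : ∃ h0 ∈ H, Relation.ReflTransGen G.dir h0 x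
              · rcases hxd with ⟨h0, hh0, hp⟩
                exact hvdec h0 hh0 (hp.trans hrtg1)
              · push_neg at hxd
                apply claimK hhpc hH hxna hxd hdd hbix
                rcases hvanc with ⟨h1, hh1, hv1⟩
                refine ⟨h1, hh1, Relation.ReflTransGen.trans ?_ hv1⟩
                exact Relation.ReflTransGen.mono (fun a b hab => hhpc.1 a b hab) _ _ hrtg1
          · refine ih (i + 1) (by omega) (by omega) (Or.inr ⟨by omega, ?_, x, hPx, hrtg1⟩)
            show arrowAtRight (w.e ⟨i, hi⟩)
            rw [he']; trivial
  apply key w.n 0 (by omega) hn0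
  left
  have h0 : w.f ⟨0, by omega⟩ = a := by
    have he0 : (⟨0, by omega⟩ : Fin (w.n + 1)) = 0 := by
      apply Fin.ext; simp
    rw [he0, w.first]
  rw [h0]
  exact ⟨H_sub_dis ha, Or.inl ha⟩

/-- for a head-preserving completion `Ḡ` of `G` and a head `H` of `G` with
tails `T` in `G` and `T̄` in `Ḡ`, every strictly positive distribution satisfying the
global Markov property for `G` satisfies `X_H ⊥ X_{T̄ ∖ T} | X_T`. -/
theorem head_indep_extra_tail (G Gbar : ADMG V) (hhpc : IsHPC G Gbar)
    (H : Finset V) (hH : G.IsHead H)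
    (d : V → ℕ) (p : Config V d → ℝ)
    (hpos : ∀ x, 0 < p x) (hsum : ∑ x, p x = 1) (hGM : GlobalMarkov G d p) :
    CondIndep d p H (Gbar.tail H \ G.tail H) (G.tail H) := by
  have hHbar := hhpc.2.2.2 H hH
  have hdisj1 : Disjoint H (Gbar.tail H \ G.tail H) := by
    rw [Finset.disjoint_left]
    intro x hx hx2
    exact tail_disj_head hHbar (Finset.mem_sdiff.1 hx2).1 hx
  have hdisj2 : Disjoint H (G.tail H) := by
    rw [Finset.disjoint_left]
    intro x hx hx2
    exact tail_disj_head hH hx2 hx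
  have hdisj3 : Disjoint (Gbar.tail H \ G.tail H) (G.tail H) := Finset.sdiff_disjoint
  apply hGM _ _ _ hdisj1 hdisj2 hdisj3
  intro a ha b hb ww
  have hbs := Finset.mem_sdiff.1 hb
  have hbT : b ∉ G.tail H := hbs.2
  have hbH : b ∉ H := tail_disj_head hHbar hbs.1
  have hbanc : ∃ h1 ∈ H, Relation.ReflTransGen Gbar.dir b h1 :=
    ADMG.mem_anc'.1 (tail_sub_anc hbs.1)
  have hbdec : ∀ h ∈ H, ¬ Relation.ReflTransGen G.dir h b := by
    intro h hh hp
    have hp' : Relation.ReflTransGen Gbar.dir h b :=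
      Relation.ReflTransGen.mono (fun x y hxy => hhpc.1 x y hxy) _ _ hp
    rcases hbanc with ⟨h1, hh1, hq⟩
    have h1h : h1 = h := barren_spec hHbar.2.1 h hh h1 hh1 (hp'.trans hq)
    exact Gbar.no_cycle hp' (h1h ▸ hq) (fun he => hbH (he ▸ hh))
  exact blocked_main hhpc hH hbT hbH hbdec hbanc ha ww
end

section
/- Let G be an acyclic directed mixed graph containing at least one head of size 3 or more. Then G contains two heads of the form {v_1, v_2} and {v_2, v_3}, where v_1, v_2, v_3 are distinct and the set {v_1, v_2, v_3} is barren in G. -/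
open Finset

open scoped Classical

variable {V : Type} [Fintype V] [DecidableEq V]

/-! ### Auxiliary machinery for Statement 17 -/

section Aux

/-- The conclusion of Statement 17, as a single proposition. -/
def TripleExists (G : ADMG V) : Prop :=
  ∃ v₁ v₂ v₃ : V, v₁ ≠ v₂ ∧ v₂ ≠ v₃ ∧ v₁ ≠ v₃ ∧
    G.IsHead {v₁, v₂} ∧ G.IsHead {v₂, v₃} ∧
    G.IsBarren {v₁, v₂, v₃}

lemma aux_anR_antisymm (G : ADMG V) {a b : V}
    (h1 : Relation.ReflTransGen G.dir a b) (h2 : Relation.ReflTransGen G.dir b a) : a = b := by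
  rcases Relation.reflTransGen_iff_eq_or_transGen.mp h1 with h | h
  · exact h.symm
  · exact absurd (h.trans_left h2) (G.acyclic a)

lemma aux_mem_anc (G : ADMG V) {A : Finset V} {w : V} :
    w ∈ G.anc A ↔ ∃ a ∈ A, Relation.ReflTransGen G.dir w a := by
  simp [ADMG.anc]

lemma aux_mem_dec (G : ADMG V) {v w : V} :
    w ∈ G.dec {v} ↔ Relation.ReflTransGen G.dir v w := by
  simp [ADMG.dec]

lemma aux_isBarren_of_incomp (G : ADMG V) {U : Finset V}
    (h : ∀ u ∈ U, ∀ v ∈ U, Relation.ReflTransGen G.dir u v → u = v) : G.IsBarren U := by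
  unfold ADMG.IsBarren ADMG.barren
  rw [Finset.filter_eq_self]
  intro v hv
  ext u
  simp only [Finset.mem_inter, Finset.mem_singleton, aux_mem_dec]
  constructor
  · rintro ⟨hvu, hu⟩
    exact (h v hv u hu hvu).symm
  · rintro rfl
    exact ⟨Relation.ReflTransGen.refl, hv⟩

lemma aux_chain_rtg (G : ADMG V) (S : Finset V) :
    ∀ (l : List V) (a b : V), List.Chain G.bi a (l ++ [b]) → a ∈ S → b ∈ S →
      (∀ v ∈ l, v ∈ S) → Relation.ReflTransGen (G.biStep S) a b := by
  intro l
  induction l with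
  | nil =>
    intro a b hchain ha hb _
    exact Relation.ReflTransGen.single ⟨ha, hb, (List.chain_cons.mp hchain).1⟩
  | cons c l ih =>
    intro a b hchain ha hb hl
    have hc : c ∈ S := hl c (by simp)
    obtain ⟨h1, h2⟩ := List.chain_cons.mp hchain
    exact Relation.ReflTransGen.head ⟨ha, hc, h1⟩
      (ih c b h2 hc hb fun v hv => hl v (by simp [hv]))

lemma aux_isHead_pair (G : ADMG V) {x y : V}
    (hxy : ¬ Relation.ReflTransGen G.dir x y)
    (hyx : ¬ Relation.ReflTransGen G.dir y x) (l : List V)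
    (hchain : List.Chain G.bi x (l ++ [y]))
    (hl : ∀ v ∈ l, Relation.ReflTransGen G.dir v x ∨ Relation.ReflTransGen G.dir v y) :
    G.IsHead {x, y} := by
  have hx : x ∈ G.anc {x, y} :=
    (aux_mem_anc G).mpr ⟨x, by simp, Relation.ReflTransGen.refl⟩
  have hy : y ∈ G.anc {x, y} :=
    (aux_mem_anc G).mpr ⟨y, by simp, Relation.ReflTransGen.refl⟩
  have hr : Relation.ReflTransGen (G.biStep (G.anc {x, y})) x y := by
    refine aux_chain_rtg G _ l x y hchain hx hy fun v hv => ?_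
    rcases hl v hv with h | h
    · exact (aux_mem_anc G).mpr ⟨x, by simp, h⟩
    · exact (aux_mem_anc G).mpr ⟨y, by simp, h⟩
  have hsymm : Symmetric (Relation.ReflTransGen (G.biStep (G.anc {x, y}))) :=
    by haveI : Std.Symm (G.biStep (G.anc {x, y})) := ⟨fun a b hab => ⟨hab.2.1, hab.1, G.bi_symm hab.2.2⟩⟩
       exact fun a b h => Std.Symm.symm a b h
  refine ⟨⟨x, by simp⟩, aux_isBarren_of_incomp G ?_, ?_⟩
  · intro u hu v hv huv
    simp only [Finset.mem_insert, Finset.mem_singleton] at hu hv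
    rcases hu with rfl | rfl <;> rcases hv with rfl | rfl
    · rfl
    · exact absurd huv hxy
    · exact absurd huv hyx
    · rfl
  · intro a ha b hb
    simp only [Finset.mem_insert, Finset.mem_singleton] at ha hb
    rcases ha with rfl | rfl <;> rcases hb with rfl | rfl
    · exact Relation.ReflTransGen.refl
    · exact hr
    · exact hsymm hr
    · exact Relation.ReflTransGen.refl

/-- The key lemma: given a bidirected walk from `x` to `y` such that `x, y` are
incomparable and no vertex of the walk is a proper descendant of `x` or of `y`, either
the desired triple exists, or `{x, y}` is a head. -/
lemma aux_seg (G : ADMG V) : ∀ (n : ℕ) (l : List V) (x y : V), l.length ≤ n →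
    List.Chain G.bi x (l ++ [y]) →
    ¬ Relation.ReflTransGen G.dir x y → ¬ Relation.ReflTransGen G.dir y x →
    (∀ v ∈ l, Relation.ReflTransGen G.dir x v → v = x) →
    (∀ v ∈ l, Relation.ReflTransGen G.dir y v → v = y) →
    TripleExists G ∨ G.IsHead {x, y} := by
  intro n
  induction n with
  | zero =>
    intro l x y hlen hchain hxy hyx _ _
    have hl0 : l = [] := List.eq_nil_of_length_eq_zero (Nat.le_zero.mp hlen)
    subst hl0
    exact Or.inr (aux_isHead_pair G hxy hyx [] hchain (by simp))
  | succ m ih =>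
    intro l x y hlen hchain hxy hyx hdx hdy
    by_cases hgood : ∀ v ∈ l,
        Relation.ReflTransGen G.dir v x ∨ Relation.ReflTransGen G.dir v y
    · exact Or.inr (aux_isHead_pair G hxy hyx l hchain hgood)
    push_neg at hgood
    obtain ⟨v0, hv0l, hv0⟩ := hgood
    obtain ⟨w, hwB, hwmin⟩ := Finset.exists_min_image
      (l.toFinset.filter fun v => ¬ Relation.ReflTransGen G.dir v x ∧
        ¬ Relation.ReflTransGen G.dir v y)
      (fun v => (G.dec {v}).card)
      ⟨v0, Finset.mem_filter.mpr ⟨List.mem_toFinset.mpr hv0l, hv0⟩⟩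
    have hwl : w ∈ l := List.mem_toFinset.mp (Finset.mem_filter.mp hwB).1
    have hwx : ¬ Relation.ReflTransGen G.dir w x := (Finset.mem_filter.mp hwB).2.1
    have hwy : ¬ Relation.ReflTransGen G.dir w y := (Finset.mem_filter.mp hwB).2.2
    have hwmax : ∀ u ∈ l, ¬ Relation.ReflTransGen G.dir u x →
        ¬ Relation.ReflTransGen G.dir u y → Relation.ReflTransGen G.dir w u → u = w := by
      intro u hul hux huy hwu
      by_contra hne
      have hsub : G.dec {u} ⊂ G.dec {w} := by
        constructor
        · intro z hz
          exact (aux_mem_dec G).mpr (hwu.trans ((aux_mem_dec G).mp hz))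
        · intro hsup
          have hw : w ∈ G.dec {u} := hsup ((aux_mem_dec G).mpr Relation.ReflTransGen.refl)
          exact hne (aux_anR_antisymm G ((aux_mem_dec G).mp hw) hwu)
      have hlt := Finset.card_lt_card hsub
      have hle := hwmin u (Finset.mem_filter.mpr ⟨List.mem_toFinset.mpr hul, hux, huy⟩)
      omega
    have hwnex : w ≠ x := fun h => hwx (h ▸ Relation.ReflTransGen.refl)
    have hwney : w ≠ y := fun h => hwy (h ▸ Relation.ReflTransGen.refl)
    have hxw : ¬ Relation.ReflTransGen G.dir x w := fun h => hwnex (hdx w hwl h)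
    have hyw : ¬ Relation.ReflTransGen G.dir y w := fun h => hwney (hdy w hwl h)
    have hdw : ∀ v ∈ l, Relation.ReflTransGen G.dir w v → v = w := by
      intro v hvl hwv
      by_cases h1 : Relation.ReflTransGen G.dir v x
      · exact absurd (hwv.trans h1) hwx
      by_cases h2 : Relation.ReflTransGen G.dir v y
      · exact absurd (hwv.trans h2) hwy
      exact hwmax v hvl h1 h2 hwv
    obtain ⟨l₁, l₂, rfl⟩ := List.append_of_mem hwl
    have hchain' : List.Chain G.bi x (l₁ ++ w :: (l₂ ++ [y])) := by
      simpa using hchain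
    obtain ⟨hc1, hc2⟩ := List.isChain_cons_split.mp hchain'
    have hlen' : l₁.length + l₂.length + 1 ≤ m + 1 := by
      simpa [Nat.add_assoc, Nat.add_comm, Nat.add_left_comm] using hlen
    have mem1 : ∀ v ∈ l₁, v ∈ l₁ ++ w :: l₂ := fun v hv => by simp [hv]
    have mem2 : ∀ v ∈ l₂, v ∈ l₁ ++ w :: l₂ := fun v hv => by simp [hv]
    rcases ih l₁ x w (by omega) hc1 hxw hwx
        (fun v hv => hdx v (mem1 v hv)) (fun v hv => hdw v (mem1 v hv)) with t | h1
    · exact Or.inl t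
    rcases ih l₂ w y (by omega) hc2 hwy hyw
        (fun v hv => hdw v (mem2 v hv)) (fun v hv => hdy v (mem2 v hv)) with t | h2
    · exact Or.inl t
    refine Or.inl ⟨x, w, y, hwnex.symm, hwney,
      fun h => hxy (h ▸ Relation.ReflTransGen.refl), h1, h2, aux_isBarren_of_incomp G ?_⟩
    intro u hu v hv huv
    simp only [Finset.mem_insert, Finset.mem_singleton] at hu hv
    rcases hu with rfl | rfl | rfl <;> rcases hv with rfl | rfl | rfl
    · rfl
    · exact absurd huv hxw
    · exact absurd huv hxy
    · exact absurd huv hwx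
    · rfl
    · exact absurd huv hwy
    · exact absurd huv hyx
    · exact absurd huv hyw
    · rfl

/-- A reflexive–transitive chain of bidirected steps inside `S` yields a list-chain. -/
lemma aux_rtg_to_chain (G : ADMG V) (S : Finset V) {a b : V}
    (h : Relation.ReflTransGen (G.biStep S) a b) :
    a = b ∨ ∃ l : List V, List.Chain G.bi a (l ++ [b]) ∧ ∀ v ∈ l, v ∈ S := by
  induction h with
  | refl => exact Or.inl rfl
  | @tail b' c hab hbc ih =>
    rcases ih with rfl | ⟨l, hc, hmem⟩
    · exact Or.inr ⟨[], List.chain_cons.mpr ⟨hbc.2.2, List.Chain.nil⟩, by simp⟩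
    · refine Or.inr ⟨l ++ [b'], ?_, ?_⟩
      · have : List.Chain G.bi a (l ++ b' :: [c]) :=
          List.isChain_cons_split.mpr ⟨hc, List.Chain.cons hbc.2.2 List.Chain.nil⟩
        simpa using this
      · intro v hv
        rcases List.mem_append.mp hv with hv | hv
        · exact hmem v hv
        · simp only [List.mem_singleton] at hv
          exact hv ▸ hbc.1

end Aux

/-- if `G` contains a head of size at least 3, then it contains heads
`{v₁, v₂}` and `{v₂, v₃}` with `v₁, v₂, v₃` distinct and `{v₁, v₂, v₃}` barren. -/
theorem exists_overlapping_two_heads (G : ADMG V) (H : Finset V)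
    (hH : G.IsHead H) (hcard : 3 ≤ H.card) :
    ∃ v₁ v₂ v₃ : V, v₁ ≠ v₂ ∧ v₂ ≠ v₃ ∧ v₁ ≠ v₃ ∧
      G.IsHead {v₁, v₂} ∧ G.IsHead {v₂, v₃} ∧
      G.IsBarren {v₁, v₂, v₃} := by
  obtain ⟨hne, hbar, hconn⟩ := hH
  have hpt : ∀ v ∈ H, G.dec {v} ∩ H = {v} := by
    intro v hv
    have hv' : v ∈ G.barren H := by rw [hbar]; exact hv
    exact (Finset.mem_filter.mp hv').2
  have hinc : ∀ u ∈ H, ∀ v ∈ H, Relation.ReflTransGen G.dir u v → u = v := by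
    intro u hu v hv huv
    have h1 : v ∈ G.dec {u} ∩ H :=
      Finset.mem_inter.mpr ⟨(aux_mem_dec G).mpr huv, hv⟩
    rw [hpt u hu] at h1
    exact (Finset.mem_singleton.mp h1).symm
  have hprop : ∀ h0 ∈ H, ∀ v, v ∈ G.anc H → Relation.ReflTransGen G.dir h0 v → v = h0 := by
    intro h0 h0H v hv h
    obtain ⟨a, haH, hva⟩ := (aux_mem_anc G).mp hv
    have ha0 : h0 = a := hinc h0 h0H a haH (h.trans hva)
    subst ha0
    exact (aux_anR_antisymm G h hva).symm
  have key : ∀ a ∈ H, ∀ b ∈ H, a ≠ b → TripleExists G ∨ G.IsHead {a, b} := by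
    intro a ha b hb hab
    have hnab : ¬ Relation.ReflTransGen G.dir a b := fun h => hab (hinc a ha b hb h)
    have hnba : ¬ Relation.ReflTransGen G.dir b a := fun h => hab (hinc b hb a ha h).symm
    rcases aux_rtg_to_chain G (G.anc H) (hconn a ha b hb) with h | ⟨l, hc, hmem⟩
    · exact absurd h hab
    exact aux_seg G l.length l a b le_rfl hc hnab hnba
      (fun v hv => hprop a ha v (hmem v hv))
      (fun v hv => hprop b hb v (hmem v hv))
  obtain ⟨h₁, h1H, h₂, h2H, h₃, h3H, h12, h13, h23⟩ :=
    Finset.two_lt_card.mp (by omega : 2 < H.card)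
  rcases key h₁ h1H h₂ h2H h12 with t | hhead1
  · exact t
  rcases key h₂ h2H h₃ h3H h23 with t | hhead2
  · exact t
  refine ⟨h₁, h₂, h₃, h12, h23, h13, hhead1, hhead2, aux_isBarren_of_incomp G ?_⟩
  intro u hu v hv huv
  simp only [Finset.mem_insert, Finset.mem_singleton] at hu hv
  have huH : u ∈ H := by rcases hu with rfl | rfl | rfl <;> assumption
  have hvH : v ∈ H := by rcases hv with rfl | rfl | rfl <;> assumption
  exact hinc u huH v hvH huv
end

section
/- Let G be an acyclic directed mixed graph on a finite vertex set V, and let Ḡ be obtained from G by adding a bidirected edge v↔w for every pair of distinct vertices v, w that are joined by no edge in G. Then Ḡ is an ADMG, every pair of distinct vertices of Ḡ is joined by at least one edge, and every head of G is a head of Ḡ; that is, Ḡ is a head-preserving completion of G. In particular, every ADMG admits a head-preserving completion. -/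
open Finset

open scoped Classical

variable {V : Type} [Fintype V] [DecidableEq V]

/-- adding a bidirected edge between every pair of distinct non-adjacent
vertices of `G` yields an ADMG which is a head-preserving completion of `G`; in
particular every ADMG admits a head-preserving completion. -/
theorem exists_bidirected_completion (G : ADMG V) :
    ∃ Gbar : ADMG V,
      Gbar.dir = G.dir ∧
      (∀ v w : V, Gbar.bi v w ↔
        G.bi v w ∨ (v ≠ w ∧ ¬ (G.dir v w ∨ G.dir w v ∨ G.bi v w))) ∧
      IsHPC G Gbar := by
  refine ⟨{ dir := G.dir
            bi := fun v w => G.bi v w ∨ (v ≠ w ∧ ¬ (G.dir v w ∨ G.dir w v ∨ G.bi v w))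
            bi_symm := ?_
            bi_irrefl := ?_
            acyclic := G.acyclic }, rfl, fun v w => Iff.rfl, ?_, ?_, ?_, ?_⟩
  · rintro v w (h | ⟨hne, hno⟩)
    · exact Or.inl (G.bi_symm h)
    · refine Or.inr ⟨hne.symm, ?_⟩
      rintro (h | h | h)
      · exact hno (Or.inr (Or.inl h))
      · exact hno (Or.inl h)
      · exact hno (Or.inr (Or.inr (G.bi_symm h)))
  · rintro v (h | ⟨hne, _⟩)
    · exact G.bi_irrefl v h
    · exact hne rfl
  · exact fun v w h => h
  · exact fun v w h => Or.inl h
  · intro v w hne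
    by_cases h : G.dir v w ∨ G.dir w v ∨ G.bi v w
    · rcases h with h | h | h
      · exact Or.inl h
      · exact Or.inr (Or.inl h)
      · exact Or.inr (Or.inr (Or.inl h))
    · exact Or.inr (Or.inr (Or.inr ⟨hne, h⟩))
  · intro H hH
    obtain ⟨hne, hbar, hconn⟩ := hH
    refine ⟨hne, hbar, ?_⟩
    intro a ha b hb
    refine Relation.ReflTransGen.mono ?_ a b (hconn a ha b hb)
    rintro x y ⟨hx, hy, hbi⟩
    exact ⟨hx, hy, Or.inl hbi⟩
end
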